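/- For a scalar finitely supported filter v ∈ l₀(ℤ^d) and a positive integer m, one has \widehat{v}(ξ) = O(‖ξ‖^m) as ξ → 0 (i.e., all partial derivatives of \widehat{v} of total order < m vanish at 0) if and only if there exist finitely supported filters u_β ∈ l₀(ℤ^d), for all multi-indices β ∈ ℕ₀^d with |β| = m, such that \widehat{v}(ξ) = Σ_{|β|=m} (1−e^{−iξ₁})^{β₁} ⋯ (1−e^{−iξ_d})^{β_d} \widehat{u_β}(ξ). -/

import Mathlib

open scoped BigOperators Classical
open Complex Matrix

noncomputable section

abbrev Zd (d : ℕ) := Fin d → ℤ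
abbrev Rd (d : ℕ) := Fin d → ℝ

/-- real dot product `k·ξ` of an integer vector with a real vector -/
def dotZR {d : ℕ} (k : Zd d) (ξ : Rd d) : ℝ := ∑ j, (k j : ℝ) * ξ j

/-- complex dot product of an integer vector with a complex vector -/
def dotZC {d : ℕ} (k : Zd d) (ξ : Fin d → ℂ) : ℂ := ∑ j, (k j : ℂ) * ξ j

/-- the symbol (Fourier series) `û(ξ) = Σ_k u(k) e^{-ik·ξ}` of a finitely supported
matrix-valued filter -/
def symbol {d r s : ℕ} (u : Zd d →₀ Matrix (Fin r) (Fin s) ℂ) (ξ : Rd d) :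
    Matrix (Fin r) (Fin s) ℂ :=
  u.sum fun k A => Complex.exp (-(Complex.I * (dotZR k ξ : ℂ))) • A

/-- the symbol evaluated at a complex frequency `ξ ∈ ℂ^d` -/
def symbolC {d r s : ℕ} (u : Zd d →₀ Matrix (Fin r) (Fin s) ℂ) (ξ : Fin d → ℂ) :
    Matrix (Fin r) (Fin s) ℂ :=
  u.sum fun k A => Complex.exp (-(Complex.I * dotZC k ξ)) • A

/-- symbol of a scalar filter -/
def symbolS {d : ℕ} (u : Zd d →₀ ℂ) (ξ : Rd d) : ℂ :=
  u.sum fun k c => Complex.exp (-(Complex.I * (dotZR k ξ : ℂ))) * c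

/-- a filter is strongly invertible if the inverse of its symbol is again a matrix of
`2πℤ^d`-periodic trigonometric polynomials -/
def StronglyInvertible {d r : ℕ} (u : Zd d →₀ Matrix (Fin r) (Fin r) ℂ) : Prop :=
  ∃ v : Zd d →₀ Matrix (Fin r) (Fin r) ℂ,
    ∀ ξ : Rd d, symbol u ξ * symbol v ξ = 1 ∧ symbol v ξ * symbol u ξ = 1

/-- convolution `[v * u](n) = Σ_k v(k) u(n-k)` of an arbitrary (row-vector valued)
sequence with a finitely supported matrix filter -/
def convSeq {d r s : ℕ} (v : Zd d → Matrix (Fin 1) (Fin r) ℂ)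
    (u : Zd d →₀ Matrix (Fin r) (Fin s) ℂ) : Zd d → Matrix (Fin 1) (Fin s) ℂ :=
  fun n => u.sum fun k A => v (n - k) * A

/-- `f(ξ) = O(‖ξ‖^m)` as `ξ → 0`: all partial derivatives of total order `< m`
vanish at the origin -/
def vanishesTo {d : ℕ} (m : ℕ) (f : Rd d → ℂ) : Prop :=
  ∀ j, j < m → iteratedFDeriv ℝ j f 0 = 0

/-- `M^T ξ` for an integer matrix `M` and a real vector `ξ` -/
def mulVecT {d : ℕ} (M : Matrix (Fin d) (Fin d) ℤ) (ξ : Rd d) : Rd d :=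
  fun i => ∑ j, (M j i : ℝ) * ξ j

/-- `M k` for an integer matrix `M` and an integer vector `k` -/
def mulVecZ {d : ℕ} (M : Matrix (Fin d) (Fin d) ℤ) (k : Zd d) : Zd d :=
  fun i => ∑ j, M i j * k j

/-- `Ω_M := (M^{-T} ℤ^d) ∩ [0,1)^d` -/
def OmegaSet {d : ℕ} (M : Matrix (Fin d) (Fin d) ℤ) : Set (Rd d) :=
  {ω | (∀ i, ∃ z : ℤ, mulVecT M ω i = (z : ℝ)) ∧ ∀ i, 0 ≤ ω i ∧ ω i < 1}

/-- a dilation matrix: an integer matrix all of whose (complex) eigenvalues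
are greater than one in modulus -/
def IsDilation {d : ℕ} (M : Matrix (Fin d) (Fin d) ℤ) : Prop :=
  ∀ μ ∈ spectrum ℂ (M.map fun z => (z : ℂ)), 1 < ‖μ‖

/-- `a` has order `m` sum rules with respect to `M` with matching filter `vgu` -/
def HasSumRules {d r : ℕ} (M : Matrix (Fin d) (Fin d) ℤ) (m : ℕ)
    (a : Zd d →₀ Matrix (Fin r) (Fin r) ℂ)
    (vgu : Zd d →₀ Matrix (Fin 1) (Fin r) ℂ) : Prop :=
  symbol vgu 0 ≠ 0 ∧
  ∀ ω ∈ OmegaSet M, ∀ i : Fin r,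
    vanishesTo m (fun ξ =>
      (symbol vgu (mulVecT M ξ) * symbol a (ξ + (2 * Real.pi) • ω)) 0 i -
      (if ω = (0 : Rd d) then 1 else 0) * (symbol vgu ξ) 0 i)

/-- the symbol of the `γ`-coset sequence `u^{[γ;M]}(k) = u(γ + Mk)` -/
def cosetSymbol {d r s : ℕ} (M : Matrix (Fin d) (Fin d) ℤ)
    (u : Zd d → Matrix (Fin r) (Fin s) ℂ) (γ : Zd d) (ξ : Rd d) :
    Matrix (Fin r) (Fin s) ℂ :=
  ∑ᶠ p : Zd d, Complex.exp (-(Complex.I * (dotZR p ξ : ℂ))) • u (γ + mulVecZ M p)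

/-- scalar version of the coset symbol -/
def cosetSymbolF {d : ℕ} (N : Matrix (Fin d) (Fin d) ℤ) (u : Zd d → ℂ) (γ : Zd d)
    (ξ : Rd d) : ℂ :=
  ∑ᶠ p : Zd d, Complex.exp (-(Complex.I * (dotZR p ξ : ℂ))) * u (γ + mulVecZ N p)

/-- subdivision operator `S_{u,M} w = |det M|^{1/2} (w↑M) * u` -/
def sdOp {d p q : ℕ} (M : Matrix (Fin d) (Fin d) ℤ) (u : Zd d →₀ Matrix (Fin p) (Fin q) ℂ)
    (w : Zd d → Matrix (Fin 1) (Fin p) ℂ) : Zd d → Matrix (Fin 1) (Fin q) ℂ :=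
  fun n => (Real.sqrt (M.det.natAbs) : ℂ) • ∑ᶠ k : Zd d, w k * u (n - mulVecZ M k)

/-- transition operator `T_{u,M} v = |det M|^{1/2} (v * u^*)(M·)` -/
def tzOp {d p q : ℕ} (M : Matrix (Fin d) (Fin d) ℤ) (u : Zd d →₀ Matrix (Fin p) (Fin q) ℂ)
    (v : Zd d → Matrix (Fin 1) (Fin q) ℂ) : Zd d → Matrix (Fin 1) (Fin p) ℂ :=
  fun n => (Real.sqrt (M.det.natAbs) : ℂ) • ∑ᶠ k : Zd d, v k * (u (k - mulVecZ M n))ᴴ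

/-- a polynomial sequence of (total) degree at most `m` -/
def IsPolySeq {d : ℕ} (m : ℕ) (p : Zd d → ℂ) : Prop :=
  ∃ P : MvPolynomial (Fin d) ℂ, P.totalDegree ≤ m ∧
    ∀ k : Zd d, p k = MvPolynomial.eval (fun j => (k j : ℂ)) P

/-- a polynomial sequence of (total) degree less than `m` -/
def IsPolySeqLt {d : ℕ} (m : ℕ) (p : Zd d → ℂ) : Prop :=
  ∃ P : MvPolynomial (Fin d) ℂ, P.totalDegree < m ∧
    ∀ k : Zd d, p k = MvPolynomial.eval (fun j => (k j : ℂ)) P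

/-- convolution `p * y` of a (scalar) polynomial sequence with a finitely supported
row-vector filter -/
def polyConv {d r : ℕ} (p : Zd d → ℂ) (y : Zd d →₀ Matrix (Fin 1) (Fin r) ℂ) :
    Zd d → Matrix (Fin 1) (Fin r) ℂ :=
  fun n => y.sum fun j A => p (n - j) • A

/-- the standard vector conversion operator `E_N` associated with `N` and the coset
representatives `s` -/
def ENop {d r : ℕ} (N : Matrix (Fin d) (Fin d) ℤ) (s : Fin r → Zd d)
    (v : Zd d → ℂ) : Zd d → Matrix (Fin 1) (Fin r) ℂ :=
  fun k => Matrix.of fun _ j => v (mulVecZ N k + s j)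

/-- the row vector `Υ_N(ξ) = (e^{i N^{-1} s_1 · ξ}, …, e^{i N^{-1} s_r · ξ})` -/
def UpsN {d r : ℕ} (N : Matrix (Fin d) (Fin d) ℤ) (s : Fin r → Zd d) (ξ : Rd d) :
    Matrix (Fin 1) (Fin r) ℂ :=
  Matrix.of fun _ j => Complex.exp (Complex.I *
    ((∑ t, ((N.map fun z => (z : ℝ))⁻¹.mulVec fun i => (s j i : ℝ)) t * ξ t : ℝ) : ℂ))

/-- the sequence `∇^β δ`, whose symbol is `Π_j (1 - e^{-iξ_j})^{β_j}` -/
def nablaDelta {d : ℕ} (β : Fin d → ℕ) : Zd d → ℂ :=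
  fun k => ∏ j, if 0 ≤ k j then ((-1 : ℂ) ^ (k j).toNat * ((β j).choose (k j).toNat : ℂ)) else 0

/-- the matrix `F_{r;M}(ξ) = (e^{-i γ_l · (ξ + 2π ω_k)} I_r)_{l,k}` -/
def FMat {d r n : ℕ} (γ : Fin n → Zd d) (ω : Fin n → Rd d) (ξ : Rd d) :
    Matrix (Fin n × Fin r) (Fin n × Fin r) ℂ :=
  Matrix.of fun li kj =>
    if li.2 = kj.2 then
      Complex.exp (-(Complex.I * (dotZR (γ li.1) (ξ + (2 * Real.pi) • ω kj.1) : ℂ)))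
    else 0

/-- the matrix `D_{u,ω;M}(ξ)` whose `(l,k)`-th `r×r` block is `û(ξ+2πω)` when
`ω_l + ω - ω_k ∈ ℤ^d` and `0` otherwise -/
def DMat {d r n : ℕ} (u : Zd d →₀ Matrix (Fin r) (Fin r) ℂ) (ω : Fin n → Rd d)
    (ωv : Rd d) (ξ : Rd d) : Matrix (Fin n × Fin r) (Fin n × Fin r) ℂ :=
  Matrix.of fun li kj =>
    if ∀ i, ∃ z : ℤ, (ω li.1 + ωv - ω kj.1) i = (z : ℝ) then
      symbol u (ξ + (2 * Real.pi) • ωv) li.2 kj.2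
    else 0

/-- the matrix `E_{u,ω;M}(ξ)` whose `(l,k)`-th block is `û^{[γ_k-γ_l;M]}(ξ) e^{-iγ_k·(2πω)}` -/
def EMat {d r n : ℕ} (M : Matrix (Fin d) (Fin d) ℤ)
    (u : Zd d →₀ Matrix (Fin r) (Fin r) ℂ) (γ : Fin n → Zd d)
    (ωv : Rd d) (ξ : Rd d) : Matrix (Fin n × Fin r) (Fin n × Fin r) ℂ :=
  Matrix.of fun li kj =>
    (Complex.exp (-(Complex.I * (dotZR (γ kj.1) ((2 * Real.pi) • ωv) : ℂ))) •
      cosetSymbol M (fun k => u k) (γ kj.1 - γ li.1) ξ) li.2 kj.2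

/-- the matrix `P_{u;M}(ξ) = [û(ξ+2πω_1), …, û(ξ+2πω_{d_M})]` -/
def PMat {d r sc n : ℕ} (u : Zd d →₀ Matrix (Fin sc) (Fin r) ℂ) (ω : Fin n → Rd d)
    (ξ : Rd d) : Matrix (Fin sc) (Fin n × Fin r) ℂ :=
  Matrix.of fun i kj => symbol u (ξ + (2 * Real.pi) • ω kj.1) i kj.2

/-- the matrix `Q_{u;M}(ξ) = [û^{[γ_1;M]}(ξ), …, û^{[γ_{d_M};M]}(ξ)]` -/
def QMat {d r sc n : ℕ} (M : Matrix (Fin d) (Fin d) ℤ)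
    (u : Zd d →₀ Matrix (Fin sc) (Fin r) ℂ) (γ : Fin n → Zd d)
    (ξ : Rd d) : Matrix (Fin sc) (Fin n × Fin r) ℂ :=
  Matrix.of fun i kj => cosetSymbol M (fun k => u k) (γ kj.1) ξ i kj.2

/-- `j`-fold application of the transition operator with low-pass filter `a`:
the low-pass framelet coefficients `v_j` -/
def tzIter {d r : ℕ} (M : Matrix (Fin d) (Fin d) ℤ)
    (a : Zd d →₀ Matrix (Fin r) (Fin r) ℂ)
    (v0 : Zd d → Matrix (Fin 1) (Fin r) ℂ) : ℕ → Zd d → Matrix (Fin 1) (Fin r) ℂ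
  | 0 => v0
  | j + 1 => tzOp M a (tzIter M a v0 j)

/-- reconstruction: `reconIter … J i = ṽ_{J-i}` for the `J`-level discrete framelet
transform with filter bank `({a;b},{atil;btil})_Θ` applied to input `v0` -/
def reconIter {d r sc : ℕ} (M : Matrix (Fin d) (Fin d) ℤ)
    (a : Zd d →₀ Matrix (Fin r) (Fin r) ℂ) (b : Zd d →₀ Matrix (Fin sc) (Fin r) ℂ)
    (atil : Zd d →₀ Matrix (Fin r) (Fin r) ℂ) (btil : Zd d →₀ Matrix (Fin sc) (Fin r) ℂ)
    (Θ : Zd d →₀ Matrix (Fin r) (Fin r) ℂ)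
    (v0 : Zd d → Matrix (Fin 1) (Fin r) ℂ) (J : ℕ) : ℕ → Zd d → Matrix (Fin 1) (Fin r) ℂ
  | 0 => convSeq (tzIter M a v0 J) Θ
  | i + 1 => fun n =>
      sdOp M atil (reconIter M a b atil btil Θ v0 J i) n +
      sdOp M btil (tzOp M b (tzIter M a v0 (J - i - 1))) n

/-- the `J`-level discrete framelet transform has the perfect reconstruction property:
every input `v0` is exactly and uniquely recovered via the deconvolution `x * Θ = ṽ_0` -/
def PerfectReconstruction {d r sc : ℕ} (M : Matrix (Fin d) (Fin d) ℤ)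
    (a : Zd d →₀ Matrix (Fin r) (Fin r) ℂ) (b : Zd d →₀ Matrix (Fin sc) (Fin r) ℂ)
    (atil : Zd d →₀ Matrix (Fin r) (Fin r) ℂ) (btil : Zd d →₀ Matrix (Fin sc) (Fin r) ℂ)
    (Θ : Zd d →₀ Matrix (Fin r) (Fin r) ℂ) (J : ℕ) : Prop :=
  ∀ v0 : Zd d → Matrix (Fin 1) (Fin r) ℂ,
    convSeq v0 Θ = reconIter M a b atil btil Θ v0 J J ∧
    ∀ x, convSeq x Θ = reconIter M a b atil btil Θ v0 J J → x = v0

/-! ### Auxiliary development for stmt2 -/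

section Stmt2Aux

open Polynomial AddMonoidAlgebra

/-- the algebra of finitely supported filters, as a commutative ring -/
abbrev AAx (d : ℕ) := AddMonoidAlgebra ℂ (Zd d)

variable {d : ℕ}

/-- alternating binomial sum `∑ (-1)^t C(b,t) P(x+t)` -/
noncomputable def Sb (b : ℕ) (P : Polynomial ℂ) (x : ℂ) : ℂ :=
  ∑ t ∈ Finset.range (b+1), (-1:ℂ)^t * (Nat.choose b t : ℂ) * P.eval (x + t)

lemma Sb_zero (P : Polynomial ℂ) (x : ℂ) : Sb 0 P x = P.eval x := by
  unfold Sb; simp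

lemma Sb_succ (b : ℕ) (P : Polynomial ℂ) (x : ℂ) :
    Sb (b+1) P x = Sb b P x - Sb b P (x+1) := by
  have h1 : Sb (b+1) P x
      = (∑ t ∈ Finset.range (b+1),
          (-1:ℂ)^(t+1) * (((b+1).choose (t+1) : ℕ) : ℂ) * P.eval (x + ((t:ℕ)+1 : ℕ))) + P.eval x := by
    unfold Sb
    rw [Finset.sum_range_succ']
    simp
  have h2 : Sb b P x
      = (∑ t ∈ Finset.range b,
          (-1:ℂ)^(t+1) * ((b.choose (t+1) : ℕ) : ℂ) * P.eval (x + ((t:ℕ)+1 : ℕ))) + P.eval x := by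
    unfold Sb
    rw [Finset.sum_range_succ']
    simp
  have h3 : ∀ t : ℕ, (((b+1).choose (t+1) : ℕ) : ℂ) = (b.choose t : ℂ) + (b.choose (t+1) : ℂ) := by
    intro t; rw [Nat.choose_succ_succ]; push_cast; ring
  have h4 : Sb (b+1) P x
      = ((∑ t ∈ Finset.range (b+1), (-1:ℂ)^(t+1) * (b.choose t : ℂ) * P.eval (x + ((t:ℕ)+1:ℕ)))
        + (∑ t ∈ Finset.range (b+1), (-1:ℂ)^(t+1) * (b.choose (t+1) : ℂ) * P.eval (x + ((t:ℕ)+1:ℕ))))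
        + P.eval x := by
    rw [h1, ← Finset.sum_add_distrib]
    congr 1
    refine Finset.sum_congr rfl fun t _ => ?_
    rw [h3]; ring
  have h5 : (∑ t ∈ Finset.range (b+1), (-1:ℂ)^(t+1) * (b.choose t : ℂ) * P.eval (x + ((t:ℕ)+1:ℕ)))
      = - Sb b P (x+1) := by
    unfold Sb
    rw [← Finset.sum_neg_distrib]
    refine Finset.sum_congr rfl fun t _ => ?_
    have : x + ((t:ℕ)+1:ℕ) = (x + 1) + (t:ℕ) := by push_cast; ring
    rw [this]; ring
  have h6 : (∑ t ∈ Finset.range (b+1), (-1:ℂ)^(t+1) * (b.choose (t+1) : ℂ) * P.eval (x + ((t:ℕ)+1:ℕ)))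
      = ∑ t ∈ Finset.range b, (-1:ℂ)^(t+1) * (b.choose (t+1) : ℂ) * P.eval (x + ((t:ℕ)+1:ℕ)) := by
    rw [Finset.sum_range_succ, Nat.choose_succ_self]
    simp
  rw [h4, h5, h6]
  have := h2
  linear_combination -this

lemma Sb_taylor (b : ℕ) (P : Polynomial ℂ) (x : ℂ) :
    Sb b P (x+1) = Sb b (Polynomial.taylor 1 P) x := by
  unfold Sb
  refine Finset.sum_congr rfl fun t _ => ?_
  rw [Polynomial.taylor_eval]
  ring_nf

lemma Sb_sub (b : ℕ) (P Q : Polynomial ℂ) (x : ℂ) :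
    Sb b (P - Q) x = Sb b P x - Sb b Q x := by
  unfold Sb
  rw [← Finset.sum_sub_distrib]
  refine Finset.sum_congr rfl fun t _ => ?_
  rw [Polynomial.eval_sub]; ring

lemma Sb_neg (b : ℕ) (P : Polynomial ℂ) (x : ℂ) : Sb b (-P) x = - Sb b P x := by
  have this := Sb_sub b 0 P x
  have h0 : Sb b 0 x = 0 := by
    unfold Sb
    simp
  rw [zero_sub, h0, zero_sub] at this
  exact this

lemma Sb_sum {ι : Type*} (s : Finset ι) (b : ℕ) (P : ι → Polynomial ℂ) (x : ℂ) :
    Sb b (∑ i ∈ s, P i) x = ∑ i ∈ s, Sb b (P i) x := by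
  unfold Sb
  rw [Finset.sum_comm]
  refine Finset.sum_congr rfl fun t _ => ?_
  rw [Polynomial.eval_finset_sum, Finset.mul_sum]

lemma Sb_C_mul (b : ℕ) (c : ℂ) (P : Polynomial ℂ) (x : ℂ) :
    Sb b (Polynomial.C c * P) x = c * Sb b P x := by
  unfold Sb
  rw [Finset.mul_sum]
  refine Finset.sum_congr rfl fun t _ => ?_
  rw [Polynomial.eval_mul, Polynomial.eval_C]; ring

lemma Sb_pow : ∀ b : ℕ, ∀ g ≤ b, ∀ x : ℂ,
    Sb b (X^g) x = if g = b then (-1:ℂ)^b * (Nat.factorial b : ℂ) else 0 := by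
  intro b
  induction b with
  | zero =>
    intro g hg x
    have : g = 0 := Nat.le_zero.mp hg
    subst this
    simp [Sb_zero]
  | succ b ih =>
    intro g hg x
    rcases Nat.lt_or_ge g (b+1) with h | h
    · have hgb : g ≤ b := Nat.lt_succ_iff.mp h
      have hne : g ≠ b+1 := by omega
      rw [Sb_succ, ih g hgb x, ih g hgb (x+1)]
      simp [hne]
    · have hg1 : g = b+1 := le_antisymm hg h
      subst hg1
      rw [Sb_succ, Sb_taylor]
      have ht : Polynomial.taylor (1:ℂ) (X^(b+1)) = ((X:ℂ[X]) + 1)^(b+1) := by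
        rw [Polynomial.taylor_apply, Polynomial.pow_comp, Polynomial.X_comp, _root_.map_one]
      have hexp : ((X:ℂ[X]) + 1)^(b+1)
          = (∑ k ∈ Finset.range (b+1), X^k * ((b+1).choose k : ℂ[X])) + X^(b+1) := by
        rw [add_pow]
        rw [Finset.sum_range_succ]
        simp
      have key : Sb b (X^(b+1)) x - Sb b (Polynomial.taylor (1:ℂ) (X^(b+1))) x
          = - ∑ k ∈ Finset.range (b+1), ((b+1).choose k : ℂ) * Sb b (X^k) x := by
        rw [← Sb_sub, ht, hexp]
        have e1 : ∀ k ∈ Finset.range (b+1),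
            (X:ℂ[X])^k * ((b+1).choose k : ℂ[X]) = Polynomial.C (((b+1).choose k : ℂ)) * X^k :=
          fun k _ => by rw [mul_comm]; norm_cast
        rw [Finset.sum_congr rfl e1]
        have e2 : (X:ℂ[X])^(b+1)
            - ((∑ k ∈ Finset.range (b+1), Polynomial.C (((b+1).choose k : ℂ)) * X^k) + X^(b+1))
            = -(∑ k ∈ Finset.range (b+1), Polynomial.C (((b+1).choose k : ℂ)) * X^k) := by ring
        rw [e2, Sb_neg, Sb_sum]
        congr 1
        exact Finset.sum_congr rfl fun k _ => Sb_C_mul b _ _ x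
      rw [key]
      have heach : ∀ k ∈ Finset.range (b+1), ((b+1).choose k : ℂ) * Sb b (X^k) x
          = if k = b then ((b+1).choose k : ℂ) * ((-1:ℂ)^b * (Nat.factorial b : ℂ)) else 0 := by
        intro k hk
        rw [ih k (Nat.lt_succ_iff.mp (Finset.mem_range.mp hk)) x]
        split <;> simp
      rw [Finset.sum_congr rfl heach, Finset.sum_ite_eq' (Finset.range (b+1))]
      have hb : b ∈ Finset.range (b+1) := Finset.self_mem_range_succ b
      rw [if_pos hb]
      rw [Nat.choose_succ_self_right]
      simp only [if_pos rfl]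
      rw [Nat.factorial_succ]
      push_cast
      ring

/-! moment functionals on filters -/

noncomputable def momf (f : Zd d → ℂ) (u : AAx d) : ℂ := Finsupp.sum u.coeff fun k c => c * f k

lemma momf_zero (f : Zd d → ℂ) : momf f (0 : AAx d) = 0 := by
  unfold momf; rw [AddMonoidAlgebra.coeff_zero]; exact Finsupp.sum_zero_index

lemma momf_add (f : Zd d → ℂ) (u w : AAx d) : momf f (u + w) = momf f u + momf f w := by
  unfold momf; rw [AddMonoidAlgebra.coeff_add]; exact Finsupp.sum_add_index' (fun _ => zero_mul _) (fun _ b₁ b₂ => add_mul b₁ b₂ _)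

lemma momf_sub (f : Zd d → ℂ) (u w : AAx d) : momf f (u - w) = momf f u - momf f w := by
  unfold momf; rw [AddMonoidAlgebra.coeff_sub]; exact Finsupp.sum_sub_index (fun _ b₁ b₂ => sub_mul b₁ b₂ _)

lemma momf_single (f : Zd d → ℂ) (k : Zd d) (c : ℂ) :
    momf f (AddMonoidAlgebra.single k c) = c * f k := by
  unfold momf; rw [AddMonoidAlgebra.coeff_single]; exact Finsupp.sum_single_index (zero_mul _)

lemma momf_congr {f g : Zd d → ℂ} (h : ∀ k, f k = g k) (u : AAx d) : momf f u = momf g u := by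
  unfold momf; exact Finsupp.sum_congr fun k _ => by rw [h k]

lemma momf_sum {ι : Type*} (f : Zd d → ℂ) (s : Finset ι) (g : ι → AAx d) :
    momf f (∑ i ∈ s, g i) = ∑ i ∈ s, momf f (g i) := by
  classical
  induction s using Finset.cons_induction with
  | empty => simp [momf_zero]
  | cons a s ha ih => rw [Finset.sum_cons, momf_add, ih, Finset.sum_cons]

lemma momf_single_mul (f : Zd d → ℂ) (a : Zd d) (c : ℂ) (u : AAx d) :
    momf f (AddMonoidAlgebra.single a c * u) = c * momf (fun n => f (a + n)) u := by
  induction u using AddMonoidAlgebra.induction_linear with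
  | zero => rw [mul_zero]; simp [momf_zero]
  | add u w hu hw => rw [mul_add, momf_add, hu, hw, momf_add]; ring
  | single b cb =>
    rw [AddMonoidAlgebra.single_mul_single, momf_single, momf_single]; ring

/-- the elementary difference filter symbol `1 - z_j` -/
noncomputable def zg (j : Fin d) : AAx d := AddMonoidAlgebra.single (Pi.single j 1) 1

/-- the difference filter `∇^β δ = ∏ (1-z_j)^{β_j}` -/
noncomputable def gpow (β : Fin d → ℕ) : AAx d := ∏ j, (1 - zg j)^(β j)

lemma momf_one_sub_zg_mul (f : Zd d → ℂ) (j : Fin d) (u : AAx d) :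
    momf f ((1 - zg j) * u) = momf (fun n => f n - f (Pi.single j 1 + n)) u := by
  rw [sub_mul, one_mul, momf_sub, zg, momf_single_mul, one_mul]
  unfold momf
  rw [← Finsupp.sum_sub]
  exact Finsupp.sum_congr fun k _ => by ring

/-- the `γ`-moment of a filter -/
noncomputable def mom (γ : Fin d → ℕ) (u : AAx d) : ℂ :=
  momf (fun n => ∏ j, ((n j : ℂ))^(γ j)) u

/-- the total mass of a filter -/
noncomputable def tot (u : AAx d) : ℂ := Finsupp.sum u.coeff fun _ c => c

lemma momf_const (c : ℂ) (u : AAx d) : momf (fun _ => c) u = c * tot u := by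
  unfold momf tot
  rw [Finsupp.mul_sum]
  exact Finsupp.sum_congr fun k _ => by ring

lemma momf_zero_fun (u : AAx d) : momf (fun _ => (0:ℂ)) u = 0 := by
  rw [momf_const, zero_mul]

lemma mom_zero_eq_tot (v : AAx d) : mom (fun _ => 0) v = tot v := by
  unfold mom
  rw [momf_congr (g := fun _ => (1:ℂ)) (fun k => by simp) v, momf_const, one_mul]

/-- the key computation: moments of `∇^β δ * u` in terms of alternating binomial sums -/
lemma claimF : ∀ (N : ℕ) (β : Fin d → ℕ), (∑ j, β j) = N → ∀ (γ : Fin d → ℕ) (u : AAx d),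
    mom γ (gpow β * u)
      = momf (fun n => ∏ j, Sb (β j) (X^(γ j)) ((n j : ℂ))) u := by
  intro N
  induction N with
  | zero =>
    intro β hβ γ u
    have hβ0 : ∀ j, β j = 0 := by
      intro j
      exact (Finset.sum_eq_zero_iff.mp hβ) j (Finset.mem_univ j)
    have hg : gpow β = 1 := by
      unfold gpow
      exact Finset.prod_eq_one fun j _ => by rw [hβ0 j, pow_zero]
    rw [hg, one_mul]
    unfold mom
    refine momf_congr (fun k => ?_) u
    refine Finset.prod_congr rfl fun j _ => ?_
    rw [hβ0 j, Sb_zero]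
    simp
  | succ N ih =>
    intro β hβ γ u
    have hex : ∃ j, 0 < β j := by
      by_contra hc
      push_neg at hc
      have : ∑ j, β j = 0 := Finset.sum_eq_zero fun j _ => Nat.le_zero.mp (hc j)
      omega
    obtain ⟨j, hj⟩ := hex
    set β' := Function.update β j (β j - 1) with hβ'def
    have hβ'j : β' j = β j - 1 := Function.update_self j _ β
    have hβ'i : ∀ i ≠ j, β' i = β i := fun i hi => Function.update_of_ne hi _ β
    have hsum' : ∑ i, β' i = N := by
      rw [← Finset.add_sum_erase _ β' (Finset.mem_univ j)] at *
      rw [← Finset.add_sum_erase _ β (Finset.mem_univ j)] at hβ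
      have he : ∑ i ∈ Finset.univ.erase j, β' i = ∑ i ∈ Finset.univ.erase j, β i :=
        Finset.sum_congr rfl fun i hi => hβ'i i (Finset.mem_erase.mp hi).1
      rw [hβ'j, he]
      omega
    have hfact : gpow β = (1 - zg j) * gpow β' := by
      unfold gpow
      rw [← Finset.mul_prod_erase Finset.univ _ (Finset.mem_univ j),
          ← Finset.mul_prod_erase Finset.univ (fun i => (1 - zg i)^(β' i)) (Finset.mem_univ j)]
      have h1 : ∏ i ∈ Finset.univ.erase j, (1 - zg i)^(β' i)
          = ∏ i ∈ Finset.univ.erase j, (1 - zg i)^(β i) :=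
        Finset.prod_congr rfl fun i hi => by rw [hβ'i i (Finset.mem_erase.mp hi).1]
      rw [h1, ← mul_assoc]
      congr 1
      rw [hβ'j, ← pow_succ']
      congr 1
      omega
    have hcomm : gpow β * u = gpow β' * ((1 - zg j) * u) := by
      rw [hfact]; ring
    rw [hcomm, ih β' hsum' γ ((1 - zg j) * u), momf_one_sub_zg_mul]
    refine momf_congr (fun n => ?_) u
    have hsplit : ∀ (x : Zd d), ∏ i, Sb (β' i) (X^(γ i)) ((x i : ℂ))
        = Sb (β' j) (X^(γ j)) ((x j : ℂ))
          * ∏ i ∈ Finset.univ.erase j, Sb (β i) (X^(γ i)) ((x i : ℂ)) := by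
      intro x
      rw [← Finset.mul_prod_erase Finset.univ _ (Finset.mem_univ j)]
      congr 1
      exact Finset.prod_congr rfl fun i hi => by rw [hβ'i i (Finset.mem_erase.mp hi).1]
    rw [hsplit, hsplit]
    have hnj : (((Pi.single j 1 : Zd d) + n) j : ℂ) = (n j : ℂ) + 1 := by
      have : ((Pi.single j 1 : Zd d) + n) j = 1 + n j := by
        simp [Pi.add_apply]
      rw [this]; push_cast; ring
    have hni : ∀ i ∈ Finset.univ.erase j, (((Pi.single j 1 : Zd d) + n) i : ℂ) = ((n i : ℂ)) := by
      intro i hi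
      have hij : i ≠ j := (Finset.mem_erase.mp hi).1
      have : ((Pi.single j 1 : Zd d) + n) i = n i := by
        simp [Pi.add_apply, Pi.single_eq_of_ne hij]
      rw [this]
    have herase : ∏ i ∈ Finset.univ.erase j, Sb (β i) (X^(γ i)) ((((Pi.single j 1 : Zd d) + n) i : ℂ))
        = ∏ i ∈ Finset.univ.erase j, Sb (β i) (X^(γ i)) ((n i : ℂ)) :=
      Finset.prod_congr rfl fun i hi => by rw [hni i hi]
    rw [herase, hnj, ← sub_mul]
    rw [← Finset.mul_prod_erase Finset.univ (fun i => Sb (β i) (X^(γ i)) ((n i : ℂ)))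
        (Finset.mem_univ j)]
    congr 1
    rw [← Sb_succ]
    congr 1
    omega

lemma exists_coord_lt {β γ : Fin d → ℕ} (h : ¬ ∀ j, β j ≤ γ j) : ∃ j, γ j < β j := by
  push_neg at h; obtain ⟨j, hj⟩ := h; exact ⟨j, hj⟩

lemma mom_gpow_of_lt {β γ : Fin d → ℕ} (j : Fin d) (hj : γ j < β j) (u : AAx d) :
    mom γ (gpow β * u) = 0 := by
  rw [claimF (∑ j, β j) β rfl γ u]
  have : ∀ n : Zd d, (∏ i, Sb (β i) (X^(γ i)) ((n i : ℂ))) = 0 := by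
    intro n
    refine Finset.prod_eq_zero (Finset.mem_univ j) ?_
    rw [Sb_pow (β j) (γ j) (le_of_lt hj)]
    simp [Nat.ne_of_lt hj]
  rw [momf_congr (fun n => this n) u, momf_zero_fun]

lemma momC {β γ : Fin d → ℕ} (h : (∑ j, γ j) < (∑ j, β j)) (u : AAx d) :
    mom γ (gpow β * u) = 0 := by
  have hne : ¬ ∀ j, β j ≤ γ j := by
    intro hall
    exact absurd (Finset.sum_le_sum fun j _ => hall j) (not_le.mpr h)
  obtain ⟨j, hj⟩ := exists_coord_lt hne
  exact mom_gpow_of_lt j hj u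

lemma momB {β γ : Fin d → ℕ} (h : (∑ j, γ j) = (∑ j, β j)) (u : AAx d) :
    mom γ (gpow β * u)
      = (if γ = β then (-1:ℂ)^(∑ j, β j) * ∏ j, ((β j).factorial : ℂ) else 0) * tot u := by
  by_cases hγβ : γ = β
  · subst hγβ
    rw [claimF (∑ j, γ j) γ rfl γ u]
    have : ∀ n : Zd d, (∏ i, Sb (γ i) (X^(γ i)) ((n i : ℂ)))
        = (-1:ℂ)^(∑ j, γ j) * ∏ j, ((γ j).factorial : ℂ) := by
      intro n
      have : ∀ i, Sb (γ i) (X^(γ i)) ((n i : ℂ)) = (-1:ℂ)^(γ i) * ((γ i).factorial : ℂ) := by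
        intro i
        rw [Sb_pow (γ i) (γ i) le_rfl]
        simp
      rw [Finset.prod_congr rfl fun i _ => this i, Finset.prod_mul_distrib,
        Finset.prod_pow_eq_pow_sum]
    rw [momf_congr (fun n => this n) u, momf_const]
    simp
  · have hne : ¬ ∀ j, β j ≤ γ j := by
      intro hall
      have : ∀ j, β j = γ j := by
        intro j
        by_contra hne2
        have hlt : β j < γ j := lt_of_le_of_ne (hall j) hne2
        have : (∑ j, β j) < ∑ j, γ j :=
          Finset.sum_lt_sum (fun i _ => hall i) ⟨j, Finset.mem_univ j, hlt⟩
        omega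
      exact hγβ (funext fun j => (this j).symm)
    obtain ⟨j, hj⟩ := exists_coord_lt hne
    rw [mom_gpow_of_lt j hj u]
    simp [hγβ]

/-! ideal-theoretic part -/

noncomputable def Ispan (d : ℕ) : Ideal (AAx d) :=
  Ideal.span (Set.range fun j : Fin d => 1 - zg j)

lemma single_sub_one_mem (k : Zd d) : AddMonoidAlgebra.single k (1:ℂ) - 1 ∈ Ispan d := by
  set P : Zd d → Prop := fun k => AddMonoidAlgebra.single k (1:ℂ) - 1 ∈ Ispan d with hP
  have h0 : P 0 := by
    have : AddMonoidAlgebra.single (0 : Zd d) (1:ℂ) - 1 = 0 := by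
      rw [← AddMonoidAlgebra.one_def]; ring
    simp only [P, this]
    exact (Ispan d).zero_mem
  have hadd : ∀ a b, P a → P b → P (a + b) := by
    intro a b ha hb
    have key : AddMonoidAlgebra.single (a+b) (1:ℂ) - 1
        = AddMonoidAlgebra.single a (1:ℂ) * (AddMonoidAlgebra.single b (1:ℂ) - 1)
          + (AddMonoidAlgebra.single a (1:ℂ) - 1) := by
      rw [mul_sub, AddMonoidAlgebra.single_mul_single]
      simp only [mul_one, one_mul]
      ring
    simp only [P, key]
    exact (Ispan d).add_mem ((Ispan d).mul_mem_left _ hb) ha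
  have hneg : ∀ a, P a → P (-a) := by
    intro a ha
    have key : AddMonoidAlgebra.single (-a) (1:ℂ) - 1
        = -(AddMonoidAlgebra.single (-a) (1:ℂ) * (AddMonoidAlgebra.single a (1:ℂ) - 1)) := by
      rw [mul_sub, AddMonoidAlgebra.single_mul_single]
      simp only [mul_one, one_mul, neg_add_cancel]
      rw [← AddMonoidAlgebra.one_def]
      ring
    simp only [P, key]
    exact (Ispan d).neg_mem ((Ispan d).mul_mem_left _ ha)
  have hgen : ∀ (j : Fin d) (z : ℤ), P (Pi.single j z) := by
    intro j z
    induction z using Int.induction_on with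
    | zero =>
      have : (Pi.single j (0:ℤ) : Zd d) = 0 := Pi.single_zero j
      rw [this]; exact h0
    | succ n ihn =>
      have : (Pi.single j ((n:ℤ)+1) : Zd d) = Pi.single j (n:ℤ) + Pi.single j 1 := by
        rw [← Pi.single_add]
      rw [this]
      refine hadd _ _ ihn ?_
      simp only [P]
      have : AddMonoidAlgebra.single (Pi.single j (1:ℤ) : Zd d) (1:ℂ) - 1 = -(1 - zg j) := by
        rw [zg]; ring
      rw [this]
      exact (Ispan d).neg_mem (Ideal.subset_span ⟨j, rfl⟩)
    | pred n ihn =>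
      have : (Pi.single j (-(n:ℤ)-1) : Zd d) = Pi.single j (-(n:ℤ)) + (-(Pi.single j (1:ℤ))) := by
        rw [← Pi.single_neg, ← Pi.single_add]
        congr 1
        try ring
      rw [this]
      refine hadd _ _ ihn (hneg _ ?_)
      simp only [P]
      have : AddMonoidAlgebra.single (Pi.single j (1:ℤ) : Zd d) (1:ℂ) - 1 = -(1 - zg j) := by
        rw [zg]; ring
      rw [this]
      exact (Ispan d).neg_mem (Ideal.subset_span ⟨j, rfl⟩)
  have hk : k = ∑ j, (Pi.single j (k j) : Zd d) := by
    ext i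
    rw [Finset.sum_apply]
    simp [Pi.single_apply]
  rw [hk]
  refine Finset.sum_induction _ P hadd h0 ?_
  intro j _
  exact hgen j (k j)

lemma mem_Ispan_of_tot (v : AAx d) (hv : tot v = 0) : v ∈ Ispan d := by
  have hrep : v = Finsupp.sum v.coeff fun k c => c • (AddMonoidAlgebra.single k (1:ℂ) - 1) := by
    have h1 : (Finsupp.sum v.coeff fun k c => c • (AddMonoidAlgebra.single k (1:ℂ) - 1))
        = (Finsupp.sum v.coeff fun k c => AddMonoidAlgebra.single k c)
          - Finsupp.sum v.coeff fun k c => c • (1 : AAx d) := by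
      rw [← Finsupp.sum_sub]
      refine Finsupp.sum_congr fun k _ => ?_
      rw [smul_sub, AddMonoidAlgebra.smul_single', mul_one]
    have h2 : (Finsupp.sum v.coeff fun k c => AddMonoidAlgebra.single k c) = v := AddMonoidAlgebra.sum_coeff_single v
    have h3 : (Finsupp.sum v.coeff fun k c => c • (1 : AAx d)) = tot v • (1 : AAx d) := by
      unfold tot
      rw [Finsupp.sum, Finsupp.sum, Finset.sum_smul]
    rw [h1, h2, h3, hv, zero_smul, sub_zero]
  rw [hrep]
  refine Ideal.sum_mem _ fun k _ => ?_
  dsimp only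
  rw [Algebra.smul_def]
  exact Ideal.mul_mem_left _ _ (single_sub_one_mem k)

lemma gpow_single (j : Fin d) : gpow (Pi.single j 1) = 1 - zg j := by
  unfold gpow
  rw [Finset.prod_eq_single j]
  · rw [Pi.single_eq_same, pow_one]
  · intro i _ hij
    rw [Pi.single_eq_of_ne hij, pow_zero]
  · intro h; exact absurd (Finset.mem_univ j) h

lemma gpow_add_single (β : Fin d → ℕ) (j : Fin d) :
    gpow (β + Pi.single j 1) = (1 - zg j) * gpow β := by
  have h : gpow (β + Pi.single j 1) = gpow (Pi.single j 1) * gpow β := by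
    unfold gpow
    rw [← Finset.prod_mul_distrib]
    refine Finset.prod_congr rfl fun i _ => ?_
    rw [Pi.add_apply, pow_add]
    ring
  rw [h, gpow_single]

noncomputable def Jspan (d m : ℕ) : Ideal (AAx d) :=
  Ideal.span (Set.range fun i : {β : Fin d → ℕ // β ∈ Finset.Nat.antidiagonalTuple d m} =>
    gpow i.val)

lemma main_mem (m : ℕ) (hm : 1 ≤ m) : ∀ v : AAx d,
    (∀ γ : Fin d → ℕ, (∑ j, γ j) < m → mom γ v = 0) → v ∈ Jspan d m := by
  induction m, hm using Nat.le_induction with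
  | base =>
    intro v hv
    have htot : tot v = 0 := by
      rw [← mom_zero_eq_tot]
      exact hv (fun _ => 0) (by simp)
    have hle : Ispan d ≤ Jspan d 1 := by
      apply Ideal.span_mono
      rintro x ⟨j, rfl⟩
      refine ⟨⟨Pi.single j 1, ?_⟩, gpow_single j⟩
      rw [Finset.Nat.mem_antidiagonalTuple]
      simp
    exact hle (mem_Ispan_of_tot v htot)
  | succ m hm ih =>
    intro v hv
    have hmem : v ∈ Jspan d m := ih v fun γ h => hv γ (by omega)
    obtain ⟨c, hc⟩ := Ideal.mem_span_range_iff_exists_fun.mp hmem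
    have htot : ∀ i : {β : Fin d → ℕ // β ∈ Finset.Nat.antidiagonalTuple d m},
        tot (c i) = 0 := by
      intro i
      have hγ : (∑ j, (i.val) j) = m := Finset.Nat.mem_antidiagonalTuple.mp i.prop
      have h0 : mom i.val v = 0 := hv i.val (by omega)
      rw [← hc] at h0
      unfold mom at h0
      rw [momf_sum] at h0
      have hterm : ∀ i' : {β : Fin d → ℕ // β ∈ Finset.Nat.antidiagonalTuple d m},
          momf (fun n => ∏ j, ((n j : ℂ))^(i.val j)) (c i' * gpow i'.val)
            = if i' = i then ((-1:ℂ)^m * ∏ j, ((i.val j).factorial : ℂ)) * tot (c i') else 0 := by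
        intro i'
        have hγ' : (∑ j, (i'.val) j) = m := Finset.Nat.mem_antidiagonalTuple.mp i'.prop
        have hmc : c i' * gpow i'.val = gpow i'.val * c i' := mul_comm _ _
        rw [hmc]
        have hB := momB (β := i'.val) (γ := i.val) (by omega) (c i')
        unfold mom at hB
        rw [hB]
        by_cases h : i' = i
        · subst h
          simp [hγ']
        · have : i.val ≠ i'.val := fun hh => h (Subtype.ext hh.symm)
          simp [this, h]
      rw [Finset.sum_congr rfl fun i' _ => hterm i'] at h0
      rw [Finset.sum_ite_eq' Finset.univ i
        (fun i' => ((-1:ℂ)^m * ∏ j, ((i.val j).factorial : ℂ)) * tot (c i'))] at h0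
      simp only [Finset.mem_univ, if_pos] at h0
      have hK : ((-1:ℂ)^m * ∏ j, ((i.val j).factorial : ℂ)) ≠ 0 := by
        apply mul_ne_zero
        · exact pow_ne_zero _ (by norm_num)
        · apply Finset.prod_ne_zero_iff.mpr
          intro j _
          exact_mod_cast Nat.cast_ne_zero.mpr (Nat.factorial_ne_zero _)
      exact (mul_eq_zero.mp h0).resolve_left hK
    rw [← hc]
    refine Ideal.sum_mem _ fun i _ => ?_
    obtain ⟨w, hw⟩ := Ideal.mem_span_range_iff_exists_fun.mp (mem_Ispan_of_tot _ (htot i))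
    rw [← hw, Finset.sum_mul]
    refine Ideal.sum_mem _ fun j _ => ?_
    have hkey : w j * (1 - zg j) * gpow i.val = w j * gpow (i.val + Pi.single j 1) := by
      rw [gpow_add_single]; ring
    rw [hkey]
    refine Ideal.mul_mem_left _ _ ?_
    apply Ideal.subset_span
    refine ⟨⟨(i.val + Pi.single j 1 : Fin d → ℕ), ?_⟩, rfl⟩
    rw [Finset.Nat.mem_antidiagonalTuple]
    have h1 : ∑ t, (i.val + Pi.single j 1 : Fin d → ℕ) t
        = (∑ t, i.val t) + ∑ t, (Pi.single j 1 : Fin d → ℕ) t := by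
      rw [← Finset.sum_add_distrib]
      rfl
    have h2 : (∑ t, (Pi.single j 1 : Fin d → ℕ) t) = 1 := by simp
    have hγ : (∑ t, (i.val) t) = m := Finset.Nat.mem_antidiagonalTuple.mp i.prop
    omega

/-- cast a finitely supported function to the filter algebra -/
def toAAx {d : ℕ} (x : Zd d →₀ ℂ) : AAx d := AddMonoidAlgebra.ofCoeff x

lemma toAAx_coeff {d : ℕ} (x : AAx d) : toAAx x.coeff = x := rfl

/-! the symbol as an algebra homomorphism -/

lemma dotZR_add' (a b : Zd d) (ξ : Rd d) : dotZR (a + b) ξ = dotZR a ξ + dotZR b ξ := by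
  unfold dotZR
  rw [← Finset.sum_add_distrib]
  refine Finset.sum_congr rfl fun j _ => ?_
  rw [Pi.add_apply]
  push_cast
  ring

lemma dotZR_zero' (ξ : Rd d) : dotZR (0 : Zd d) ξ = 0 := by
  unfold dotZR; simp

noncomputable def chiHom (ξ : Rd d) : Multiplicative (Zd d) →* ℂ where
  toFun k := Complex.exp (-(Complex.I * (dotZR (Multiplicative.toAdd k) ξ : ℂ)))
  map_one' := by
    simp [dotZR_zero']
  map_mul' a b := by
    rw [← Complex.exp_add]
    congr 1
    rw [show Multiplicative.toAdd (a * b)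
        = Multiplicative.toAdd a + Multiplicative.toAdd b from rfl, dotZR_add']
    push_cast
    ring

noncomputable def symHom (ξ : Rd d) : AAx d →ₐ[ℂ] ℂ :=
  AddMonoidAlgebra.lift ℂ ℂ (Zd d) (chiHom ξ)

lemma symbolS_eq (u : Zd d →₀ ℂ) (ξ : Rd d) : symbolS u ξ = symHom ξ (toAAx u) := by
  unfold symHom
  rw [AddMonoidAlgebra.lift_apply]
  unfold symbolS
  refine Finsupp.sum_congr fun k _ => ?_
  rw [smul_eq_mul, mul_comm]
  rfl

lemma symHom_zg (ξ : Rd d) (j : Fin d) :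
    symHom ξ (zg j) = Complex.exp (-(Complex.I * ((ξ j : ℝ) : ℂ))) := by
  unfold symHom zg
  rw [AddMonoidAlgebra.lift_single, one_smul]
  show Complex.exp (-(Complex.I * (dotZR (Pi.single j 1) ξ : ℂ))) = _
  congr 2
  norm_cast
  unfold dotZR
  rw [Finset.sum_eq_single j]
  · simp
  · intro i _ hij
    rw [Pi.single_eq_of_ne hij]
    simp
  · intro h; exact absurd (Finset.mem_univ j) h

lemma symHom_gpow (ξ : Rd d) (β : Fin d → ℕ) :
    symHom ξ (gpow β) = ∏ j, (1 - Complex.exp (-(Complex.I * ((ξ j : ℝ) : ℂ))))^(β j) := by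
  unfold gpow
  rw [_root_.map_prod]
  refine Finset.prod_congr rfl fun j _ => ?_
  rw [_root_.map_pow, _root_.map_sub, _root_.map_one, symHom_zg]

/-! analytic part: derivatives of the symbol at the origin -/

noncomputable def ellk (k : Zd d) : Rd d →L[ℝ] ℂ :=
  ∑ j, ((-(Complex.I)) * (k j : ℂ)) • ((Complex.ofRealCLM).comp (ContinuousLinearMap.proj j))

lemma ellk_apply (k : Zd d) (ξ : Rd d) :
    ellk k ξ = -(Complex.I * ((∑ j, (k j : ℝ) * ξ j : ℝ) : ℂ)) := by
  unfold ellk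
  simp only [ContinuousLinearMap.sum_apply, ContinuousLinearMap.smul_apply,
    ContinuousLinearMap.comp_apply, ContinuousLinearMap.proj_apply, Complex.ofRealCLM_apply,
    smul_eq_mul]
  push_cast
  rw [Finset.mul_sum, ← Finset.sum_neg_distrib]
  refine Finset.sum_congr rfl fun j _ => by ring

lemma ellk_single (k : Zd d) (t : Fin d) :
    ellk k (Pi.single t 1) = (-(Complex.I)) * (k t : ℂ) := by
  rw [ellk_apply]
  have : (∑ j, (k j : ℝ) * (Pi.single t 1 : Rd d) j) = (k t : ℝ) := by
    rw [Finset.sum_eq_single t]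
    · simp
    · intro i _ hit
      rw [Pi.single_eq_of_ne hit]
      simp
    · intro h; exact absurd (Finset.mem_univ t) h
  rw [this]
  push_cast
  ring

lemma contDiff_expL {n : ℕ∞} (ℓ : Rd d →L[ℝ] ℂ) :
    ContDiff ℝ n (fun ξ => Complex.exp (ℓ ξ)) :=
  Complex.contDiff_exp.comp ℓ.contDiff

noncomputable def Mlin (j : ℕ) (ℓ : Rd d →L[ℝ] ℂ) :
    ContinuousMultilinearMap ℝ (fun _ : Fin j => Rd d) ℂ :=
  (ContinuousMultilinearMap.mkPiAlgebra ℝ (Fin j) ℂ).compContinuousLinearMap (fun _ => ℓ)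

lemma Mlin_apply (j : ℕ) (ℓ : Rd d →L[ℝ] ℂ) (w : Fin j → Rd d) :
    Mlin j ℓ w = ∏ i, ℓ (w i) := by
  simp [Mlin]

lemma iterE (ℓ : Rd d →L[ℝ] ℂ) : ∀ (j : ℕ) (x : Rd d),
    iteratedFDeriv ℝ j (fun ξ => Complex.exp (ℓ ξ)) x = Complex.exp (ℓ x) • Mlin j ℓ := by
  intro j
  induction j with
  | zero =>
    intro x
    ext w
    rw [iteratedFDeriv_zero_apply]
    rw [ContinuousMultilinearMap.smul_apply, Mlin_apply]
    simp
  | succ j ih =>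
    intro x
    ext w
    rw [iteratedFDeriv_succ_apply_left]
    have hrw : iteratedFDeriv ℝ j (fun ξ => Complex.exp (ℓ ξ))
        = fun y => Complex.exp (ℓ y) • Mlin j ℓ := funext ih
    rw [hrw]
    have hexp : HasFDerivAt (fun ξ : Rd d => Complex.exp (ℓ ξ))
        (Complex.exp (ℓ x) • ℓ) x := by
      have h1 : HasDerivAt Complex.exp (Complex.exp (ℓ x)) (ℓ x) :=
        Complex.hasDerivAt_exp (ℓ x)
      exact h1.comp_hasFDerivAt x ℓ.hasFDerivAt
    have hs : HasFDerivAt (fun y : Rd d => Complex.exp (ℓ y) • Mlin j ℓ)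
        ((Complex.exp (ℓ x) • ℓ).smulRight (Mlin j ℓ)) x := hexp.smul_const (Mlin j ℓ)
    rw [hs.fderiv]
    rw [ContinuousLinearMap.smulRight_apply]
    simp only [ContinuousMultilinearMap.smul_apply, Mlin_apply, ContinuousLinearMap.smul_apply]
    rw [Fin.prod_univ_succ]
    simp only [smul_eq_mul]
    have hpr : (∏ i : Fin j, ℓ (Fin.tail w i)) = ∏ i : Fin j, ℓ (w i.succ) :=
      Finset.prod_congr rfl fun i _ => rfl
    rw [hpr]
    ring

lemma A1 (v : Zd d →₀ ℂ) (j : ℕ) :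
    iteratedFDeriv ℝ j (fun ξ => symbolS v ξ) 0
      = ∑ k ∈ v.support, v k • Mlin j (ellk k) := by
  have hfun : (fun ξ => symbolS v ξ)
      = fun ξ : Rd d => ∑ k ∈ v.support, v k • Complex.exp (ellk k ξ) := by
    funext ξ
    unfold symbolS
    rw [Finsupp.sum]
    refine Finset.sum_congr rfl fun k _ => ?_
    rw [ellk_apply, smul_eq_mul, mul_comm]
    rfl
  rw [hfun]
  have hcd : ∀ k ∈ v.support, ContDiff ℝ j (fun ξ : Rd d => v k • Complex.exp (ellk k ξ)) :=
    fun k _ => (contDiff_expL (n := j) (ellk k)).const_smul (v k)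
  have hsum := iteratedFDeriv_sum (𝕜 := ℝ)
    (f := fun (k : Zd d) (ξ : Rd d) => v k • Complex.exp (ellk k ξ))
    (u := v.support) (i := j) hcd
  have h0 := congrFun hsum (0 : Rd d)
  rw [Finset.sum_apply] at h0
  refine h0.trans ?_
  refine Finset.sum_congr rfl fun k _ => ?_
  rw [iteratedFDeriv_const_smul_apply' (contDiff_expL (n := j) (ellk k)).contDiffAt]
  rw [iterE (ellk k) j 0]
  rw [_root_.map_zero, Complex.exp_zero, one_smul]

noncomputable def cnt (j : ℕ) (σ : Fin j → Fin d) (t : Fin d) : ℕ :=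
  (Finset.univ.filter fun i => σ i = t).card

lemma cnt_sum (j : ℕ) (σ : Fin j → Fin d) : ∑ t, cnt j σ t = j := by
  unfold cnt
  rw [← Finset.card_eq_sum_card_fiberwise (f := σ) (t := Finset.univ)
    (fun x _ => Finset.mem_univ (σ x))]
  simp

lemma prod_cnt (j : ℕ) (σ : Fin j → Fin d) (k : Zd d) :
    (∏ i, ((k (σ i) : ℂ))) = ∏ t, ((k t : ℂ))^(cnt j σ t) := by
  rw [← Finset.prod_fiberwise_of_maps_to (g := σ) (t := Finset.univ)
    (fun x _ => Finset.mem_univ (σ x)) (fun i => ((k (σ i) : ℂ)))]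
  refine Finset.prod_congr rfl fun t _ => ?_
  have h1 : (∏ i ∈ Finset.univ.filter (fun i => σ i = t), ((k (σ i) : ℂ)))
      = ∏ i ∈ Finset.univ.filter (fun i => σ i = t), ((k t : ℂ)) :=
    Finset.prod_congr rfl fun i hi => by rw [(Finset.mem_filter.mp hi).2]
  rw [h1, Finset.prod_const]
  rfl

lemma phi_basis (v : Zd d →₀ ℂ) (j : ℕ) (σ : Fin j → Fin d) :
    (∑ k ∈ v.support, v k • Mlin j (ellk k)) (fun i => (Pi.single (σ i) 1 : Rd d))
      = (-(Complex.I))^j * mom (cnt j σ) (toAAx v) := by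
  rw [ContinuousMultilinearMap.sum_apply]
  have hterm : ∀ k ∈ v.support,
      (v k • Mlin j (ellk k)) (fun i => (Pi.single (σ i) 1 : Rd d))
        = (-(Complex.I))^j * (v k * ∏ t, ((k t : ℂ))^(cnt j σ t)) := by
    intro k _
    rw [ContinuousMultilinearMap.smul_apply, Mlin_apply]
    rw [Finset.prod_congr rfl fun i _ => ellk_single k (σ i)]
    rw [Finset.prod_mul_distrib, Finset.prod_const, prod_cnt j σ k]
    simp only [smul_eq_mul, Finset.card_univ, Fintype.card_fin]
    ring
  rw [Finset.sum_congr rfl hterm, ← Finset.mul_sum]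
  congr 1

lemma exists_sigma : ∀ (j : ℕ) (γ : Fin d → ℕ), (∑ t, γ t) = j →
    ∃ σ : Fin j → Fin d, ∀ t, cnt j σ t = γ t := by
  intro j
  induction j with
  | zero =>
    intro γ hγ
    refine ⟨fun i => i.elim0, fun t => ?_⟩
    have h0 : γ t = 0 := (Finset.sum_eq_zero_iff.mp hγ) t (Finset.mem_univ t)
    rw [h0]
    unfold cnt
    simp
  | succ j ih =>
    intro γ hγ
    have hex : ∃ t₀, 0 < γ t₀ := by
      by_contra hc
      push_neg at hc
      have : ∑ t, γ t = 0 := Finset.sum_eq_zero fun t _ => Nat.le_zero.mp (hc t)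
      omega
    obtain ⟨t₀, ht₀⟩ := hex
    set γ' := Function.update γ t₀ (γ t₀ - 1) with hγ'def
    have hsum' : ∑ t, γ' t = j := by
      rw [← Finset.add_sum_erase _ γ' (Finset.mem_univ t₀)]
      rw [← Finset.add_sum_erase _ γ (Finset.mem_univ t₀)] at hγ
      have he : ∑ t ∈ Finset.univ.erase t₀, γ' t = ∑ t ∈ Finset.univ.erase t₀, γ t :=
        Finset.sum_congr rfl fun t ht => by
          rw [hγ'def, Function.update_of_ne (Finset.mem_erase.mp ht).1]
      rw [he, hγ'def, Function.update_self]
      omega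
    obtain ⟨σ', hσ'⟩ := ih γ' hsum'
    refine ⟨Fin.cons t₀ σ', fun t => ?_⟩
    unfold cnt
    rw [Finset.card_filter, Fin.sum_univ_succ]
    rw [Fin.cons_zero]
    have htail : ∀ i : Fin j, (Fin.cons t₀ σ' : Fin (j+1) → Fin d) i.succ = σ' i := by
      intro i; simp
    rw [Finset.sum_congr rfl fun i _ => by rw [htail i]]
    have hc' : (∑ i : Fin j, if σ' i = t then 1 else 0) = cnt j σ' t := by
      unfold cnt
      rw [Finset.card_filter]
    rw [hc', hσ' t]
    by_cases h : t = t₀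
    · subst h
      rw [hγ'def, Function.update_self, if_pos rfl]
      omega
    · rw [hγ'def, Function.update_of_ne h, if_neg (fun hh => h hh.symm)]
      omega

lemma stepA (v : Zd d →₀ ℂ) (m : ℕ) :
    vanishesTo m (fun ξ => symbolS v ξ) ↔
      ∀ γ : Fin d → ℕ, (∑ j, γ j) < m → mom γ (toAAx v) = 0 := by
  constructor
  · intro hvan γ hγ
    obtain ⟨σ, hσ⟩ := exists_sigma (∑ j, γ j) γ rfl
    have h0 := hvan (∑ j, γ j) hγ
    rw [A1] at h0
    have happ := congrArg (fun Φ : ContinuousMultilinearMap ℝ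
      (fun _ : Fin (∑ j, γ j) => Rd d) ℂ => Φ (fun i => (Pi.single (σ i) 1 : Rd d))) h0
    rw [phi_basis] at happ
    have hcntγ : cnt (∑ j, γ j) σ = γ := funext hσ
    rw [hcntγ] at happ
    have hne : (-(Complex.I))^(∑ j, γ j) ≠ 0 :=
      pow_ne_zero _ (neg_ne_zero.mpr Complex.I_ne_zero)
    have hz : (-(Complex.I))^(∑ j, γ j) * mom γ (toAAx v) = 0 := by
      rw [happ]
      simp
    exact (mul_eq_zero.mp hz).resolve_left hne
  · intro hmom j hj
    rw [A1]
    have hb : ∀ σ : Fin j → Fin d,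
        (∑ k ∈ v.support, v k • Mlin j (ellk k)) (fun i => (Pi.single (σ i) 1 : Rd d)) = 0 := by
      intro σ
      rw [phi_basis]
      rw [hmom (cnt j σ) (by rw [cnt_sum]; exact hj)]
      ring
    have hML : (∑ k ∈ v.support, v k • Mlin j (ellk k)).toMultilinearMap
        = (0 : ContinuousMultilinearMap ℝ (fun _ : Fin j => Rd d) ℂ).toMultilinearMap := by
      refine Module.Basis.ext_multilinear (fun _ => Pi.basisFun ℝ (Fin d)) fun σ => ?_
      have hbasis : ∀ i, (Pi.basisFun ℝ (Fin d)) (σ i) = (Pi.single (σ i) 1 : Rd d) :=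
        fun i => Pi.basisFun_apply ℝ (Fin d) (σ i)
      show (∑ k ∈ v.support, v k • Mlin j (ellk k)) (fun i => (Pi.basisFun ℝ (Fin d)) (σ i)) = _
      rw [show (fun i => (Pi.basisFun ℝ (Fin d)) (σ i)) = fun i => (Pi.single (σ i) 1 : Rd d)
        from funext hbasis]
      rw [hb σ]
      rfl
    ext w
    exact congrFun (congrArg MultilinearMap.toFun hML) w

end Stmt2Aux

/-- a scalar filter has `m` vanishing moments at the origin iff its symbol
factors through the difference symbols `Π_j (1-e^{-iξ_j})^{β_j}`, `|β| = m`. -/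
theorem stmt2 {d : ℕ} (m : ℕ) (hm : 0 < m) (v : Zd d →₀ ℂ) :
    vanishesTo m (fun ξ => symbolS v ξ) ↔
      ∃ u : (Fin d → ℕ) → (Zd d →₀ ℂ),
        ∀ ξ : Rd d, symbolS v ξ =
          ∑ β ∈ Finset.Nat.antidiagonalTuple d m,
            (∏ j, (1 - Complex.exp (-(Complex.I * (ξ j : ℂ)))) ^ (β j)) * symbolS (u β) ξ := by
  constructor
  · intro h
    have hmom : ∀ γ : Fin d → ℕ, (∑ j, γ j) < m → mom γ (toAAx v) = 0 := (stepA v m).mp h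
    have hv := main_mem (d := d) m hm (toAAx v) hmom
    obtain ⟨c, hc⟩ := Ideal.mem_span_range_iff_exists_fun.mp hv
    refine ⟨fun β => if hβ : β ∈ Finset.Nat.antidiagonalTuple d m then (c ⟨β, hβ⟩).coeff else 0,
      fun ξ => ?_⟩
    rw [symbolS_eq, ← hc, _root_.map_sum]
    rw [← Finset.sum_coe_sort (Finset.Nat.antidiagonalTuple d m)]
    refine Finset.sum_congr rfl fun i _ => ?_
    rw [_root_.map_mul, symHom_gpow]
    have huval : (fun β => if hβ : β ∈ Finset.Nat.antidiagonalTuple d m then (c ⟨β, hβ⟩).coeff else 0)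
        (i : Fin d → ℕ) = (c i).coeff := by
      dsimp only
      rw [dif_pos i.prop, Subtype.coe_eta]
    rw [huval, symbolS_eq (c i).coeff ξ, toAAx_coeff]
    ring
  · rintro ⟨u, hu⟩
    set w : AAx d := ∑ β ∈ Finset.Nat.antidiagonalTuple d m, gpow β * toAAx (u β) with hw
    have hfe : (fun ξ : Rd d => symbolS v ξ) = fun ξ : Rd d => symbolS w.coeff ξ := by
      funext ξ
      rw [hu ξ, symbolS_eq w.coeff ξ, toAAx_coeff, hw, _root_.map_sum]
      refine Finset.sum_congr rfl fun β hβ => ?_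
      rw [_root_.map_mul, symHom_gpow, symbolS_eq (u β) ξ]
    have hmomw : ∀ γ : Fin d → ℕ, (∑ j, γ j) < m → mom γ w = 0 := by
      intro γ hγ
      rw [hw]
      unfold mom
      rw [momf_sum]
      refine Finset.sum_eq_zero fun β hβ => ?_
      have hβm : (∑ j, β j) = m := Finset.Nat.mem_antidiagonalTuple.mp hβ
      exact momC (by omega) (toAAx (u β))
    have := (stepA w.coeff m).mpr hmomw
    rwa [hfe]

end
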